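/- Let x₀ ∈ ℝ^d be nonzero with support T, C = { sgn(x₀) + u : supp u ∩ T = ∅, ‖u‖_∞ ≤ 1 }, (S_i)_{i=1}^k a partition of {1,…,d} such that T ∩ S_i ≠ ∅ for every i, Δ^v = diag(Σ_i v_i 1_{S_i}), g a standard Gaussian random vector in ℝ^d, and φ(v) = E[dist²(g, Δ^v C)]. Then φ is coercive on ℝ_+^k: for every K > 0 there exists R > 0 such that ‖v‖₂ ≥ R and v ∈ ℝ_+^k imply φ(v) ≥ K. -/

import Mathlib

open MeasureTheory ProbabilityTheory
open scoped Pointwise BigOperators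

noncomputable section

/-- The diagonal entries of `Δ^v = diag(∑ i, v i • 𝟏_{S i})`. -/
def blockWeight {d k : ℕ} (S : Fin k → Finset (Fin d)) (v : Fin k → ℝ) (j : Fin d) : ℝ :=
  ∑ i, if j ∈ S i then v i else 0

/-- The linear map given by the diagonal matrix `Δ^v`. -/
def deltaMap {d k : ℕ} (S : Fin k → Finset (Fin d)) (v : Fin k → ℝ)
    (p : EuclideanSpace ℝ (Fin d)) : EuclideanSpace ℝ (Fin d) :=
  WithLp.toLp 2 (fun j => blockWeight S v j * p j)

/-- The sign vector of `x₀` (with `sgn 0 = 0`). -/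
def sgnVec {d : ℕ} (x₀ : EuclideanSpace ℝ (Fin d)) : EuclideanSpace ℝ (Fin d) :=
  WithLp.toLp 2 (fun j => Real.sign (x₀ j))

/-- The subdifferential of the ℓ1-norm at `x₀`:
`C = { sgn x₀ + u : supp u ∩ supp x₀ = ∅, ‖u‖_∞ ≤ 1 }`. -/
def Cset {d : ℕ} (x₀ : EuclideanSpace ℝ (Fin d)) : Set (EuclideanSpace ℝ (Fin d)) :=
  {p | ∃ u : EuclideanSpace ℝ (Fin d),
    (∀ j, x₀ j ≠ 0 → u j = 0) ∧ (∀ j, |u j| ≤ 1) ∧ p = sgnVec x₀ + u}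

/-- The standard Gaussian measure on `EuclideanSpace ℝ (Fin d)`:
independent standard Gaussian coordinates. -/
def stdGaussianE (d : ℕ) : Measure (EuclideanSpace ℝ (Fin d)) :=
  (Measure.pi fun _ : Fin d => gaussianReal 0 1).map
    (MeasurableEquiv.toLp 2 (Fin d → ℝ))

/-- `phiE S x₀ v = E[dist²(g, Δ^v C)]` for a standard Gaussian vector `g`. -/
def phiE {d k : ℕ} (S : Fin k → Finset (Fin d)) (x₀ : EuclideanSpace ℝ (Fin d))
    (v : Fin k → ℝ) : ℝ :=
  ∫ g, Metric.infDist g (deltaMap S v '' Cset x₀) ^ 2 ∂(stdGaussianE d)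

lemma le_infDist_of {α : Type*} [PseudoMetricSpace α] {s : Set α} (hs : s.Nonempty)
    {x : α} {b : ℝ} (h : ∀ y ∈ s, b ≤ dist x y) : b ≤ Metric.infDist x s := by
  by_contra hlt
  push_neg at hlt
  obtain ⟨y, hy, hd⟩ := (Metric.infDist_lt_iff hs).1 hlt
  exact absurd (h y hy) (not_le.2 hd)


lemma abs_coord_le_norm {d : ℕ} (x : EuclideanSpace ℝ (Fin d)) (j : Fin d) :
    |x j| ≤ ‖x‖ := by
  rw [EuclideanSpace.norm_eq, ← Real.sqrt_sq_eq_abs]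
  apply Real.sqrt_le_sqrt
  have : x j ^ 2 = ‖x j‖ ^ 2 := by rw [Real.norm_eq_abs, sq_abs]
  rw [this]
  exact Finset.single_le_sum (fun i _ => sq_nonneg ‖x i‖) (Finset.mem_univ j)


lemma pi_map_eval {d : ℕ} (j : Fin d) :
    (Measure.pi fun _ : Fin d => gaussianReal 0 1).map (fun x => x j) = gaussianReal 0 1 := by
  ext s hs
  rw [Measure.map_apply (measurable_pi_apply j) hs]
  have hpre : (fun x : Fin d → ℝ => x j) ⁻¹' s =
      Set.pi Set.univ (Function.update (fun _ : Fin d => (Set.univ : Set ℝ)) j s) := by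
    ext x
    simp only [Set.mem_preimage, Set.mem_pi, Set.mem_univ, true_implies]
    constructor
    · intro h i
      rcases eq_or_ne i j with rfl | hij
      · simpa using h
      · simp [Function.update_of_ne hij]
    · intro h
      simpa using h j
  rw [hpre, Measure.pi_pi]
  rw [Finset.prod_eq_single j]
  · simp
  · intro i _ hij
    simp [Function.update_of_ne hij]
  · intro h; exact absurd (Finset.mem_univ j) h


lemma gauss_sq_integrable : Integrable (fun x : ℝ => x ^ 2) (gaussianReal 0 1) := by
  rw [gaussianReal_of_var_ne_zero 0 one_ne_zero]
  rw [integrable_withDensity_iff (measurable_gaussianPDF 0 1)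
    (Filter.Eventually.of_forall fun x => ENNReal.ofReal_lt_top)]
  have heq : ∀ x : ℝ, x ^ 2 * (gaussianPDF 0 1 x).toReal
      = (Real.sqrt (2 * Real.pi))⁻¹ * (x ^ (2:ℝ) * Real.exp (-(1/2) * x ^ 2)) := by
    intro x
    rw [gaussianPDF, ENNReal.toReal_ofReal (gaussianPDFReal_nonneg _ _ _), gaussianPDFReal]
    rw [show ((2:ℝ)) = ((2:ℕ):ℝ) by norm_num, Real.rpow_natCast]
    push_cast
    rw [show -(x - 0) ^ 2 / (2 * (1:ℝ)) = -(1/2) * x ^ 2 by ring, mul_one]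
    ring
  simp only [heq]
  exact (integrable_rpow_mul_exp_neg_mul_sq (by norm_num : (0:ℝ) < 1/2)
    (by norm_num : (-1:ℝ) < 2)).const_mul _

instance stdGaussianE_prob (d : ℕ) : IsProbabilityMeasure (stdGaussianE d) := by
  unfold stdGaussianE
  exact Measure.isProbabilityMeasure_map
    (MeasurableEquiv.toLp 2 (Fin d → ℝ)).measurable.aemeasurable


lemma coord_sq_integrable {d : ℕ} (j : Fin d) :
    Integrable (fun g : EuclideanSpace ℝ (Fin d) => g j ^ 2) (stdGaussianE d) := by
  unfold stdGaussianE
  rw [integrable_map_equiv]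
  show Integrable (fun x : Fin d → ℝ => x j ^ 2) (Measure.pi fun _ : Fin d => gaussianReal 0 1)
  have h := gauss_sq_integrable
  rw [← pi_map_eval j] at h
  exact (integrable_map_measure (continuous_pow 2).aestronglyMeasurable
    (measurable_pi_apply j).aemeasurable).1 h


lemma integrable_sq_infDist {d : ℕ} (A : Set (EuclideanSpace ℝ (Fin d))) :
    Integrable (fun g => Metric.infDist g A ^ 2) (stdGaussianE d) := by
  set c0 := Metric.infDist 0 A with hc0
  have hbound : ∀ g : EuclideanSpace ℝ (Fin d),
      Metric.infDist g A ^ 2 ≤ 2 * c0 ^ 2 + 2 * ‖g‖ ^ 2 := by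
    intro g
    have h1 : Metric.infDist g A ≤ c0 + ‖g‖ := by
      have := Metric.infDist_le_infDist_add_dist (x := g) (y := 0) (s := A)
      rwa [dist_zero_right] at this
    have h2 : 0 ≤ Metric.infDist g A := Metric.infDist_nonneg
    nlinarith [sq_nonneg (c0 - ‖g‖), norm_nonneg g]
  have hnsum : Integrable (fun g : EuclideanSpace ℝ (Fin d) => 2 * c0 ^ 2 + 2 * ‖g‖ ^ 2)
      (stdGaussianE d) := by
    have hns : Integrable (fun g : EuclideanSpace ℝ (Fin d) => ∑ j, g j ^ 2)
        (stdGaussianE d) := integrable_finset_sum _ fun j _ => coord_sq_integrable j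
    have heq : ∀ g : EuclideanSpace ℝ (Fin d), ‖g‖ ^ 2 = ∑ j, g j ^ 2 := by
      intro g
      rw [EuclideanSpace.norm_eq, Real.sq_sqrt (Finset.sum_nonneg fun i _ => sq_nonneg _)]
      simp [Real.norm_eq_abs, sq_abs]
    have : Integrable (fun g : EuclideanSpace ℝ (Fin d) => ‖g‖ ^ 2) (stdGaussianE d) := by
      simpa only [heq] using hns
    exact (integrable_const (2 * c0 ^ 2)).add (this.const_mul 2)
  refine hnsum.mono' ?_ (Filter.Eventually.of_forall fun g => ?_)
  · exact ((Metric.continuous_infDist_pt A).pow 2).aestronglyMeasurable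
  · rw [Real.norm_eq_abs, abs_of_nonneg (sq_nonneg _)]
    exact hbound g


lemma gauss_Icc_pos : 0 < (gaussianReal 0 1 (Set.Icc (-1 : ℝ) 1)).toReal := by
  refine ENNReal.toReal_pos ?_ (measure_ne_top _ _)
  intro h0
  have hac := gaussianReal_absolutelyContinuous' 0 (v := 1) one_ne_zero
  have := hac h0
  rw [Real.volume_Icc] at this
  simp at this
  linarith



lemma stdGaussianE_slab {d : ℕ} (j : Fin d) :
    stdGaussianE d {g : EuclideanSpace ℝ (Fin d) | |g j| ≤ 1}
      = gaussianReal 0 1 (Set.Icc (-1 : ℝ) 1) := by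
  rw [stdGaussianE, MeasurableEquiv.map_apply]
  have hpre : (MeasurableEquiv.toLp 2 (Fin d → ℝ)) ⁻¹'
      {g : EuclideanSpace ℝ (Fin d) | |g j| ≤ 1}
      = (fun x : Fin d → ℝ => x j) ⁻¹' Set.Icc (-1 : ℝ) 1 := by
    ext x
    simp only [Set.mem_preimage, Set.mem_setOf_eq, Set.mem_Icc]
    exact abs_le
  rw [hpre, ← Measure.map_apply (measurable_pi_apply j) measurableSet_Icc, pi_map_eval]


theorem expected_sq_dist_coercive {d k : ℕ}
    (x₀ : EuclideanSpace ℝ (Fin d)) (hx₀ : x₀ ≠ 0)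
    (S : Fin k → Finset (Fin d))
    (hdisj : ∀ i₁ i₂, i₁ ≠ i₂ → Disjoint (S i₁) (S i₂))
    (hcover : ∀ j, ∃ i, j ∈ S i)
    (hTS : ∀ i, ∃ j ∈ S i, x₀ j ≠ 0) :
    ∀ K : ℝ, 0 < K → ∃ R : ℝ, 0 < R ∧
      ∀ v : Fin k → ℝ, (∀ i, 0 ≤ v i) → R ≤ Real.sqrt (∑ i, v i ^ 2) →
        K ≤ phiE S x₀ v := by
  intro K hK
  set c := (gaussianReal 0 1 (Set.Icc (-1 : ℝ) 1)).toReal with hc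
  have hcpos : 0 < c := gauss_Icc_pos
  set R := Real.sqrt k * (1 + Real.sqrt (K / c)) + 1 with hR
  have hRpos : 0 < R := by positivity
  refine ⟨R, hRpos, ?_⟩
  intro v hv hRv
  -- k ≠ 0
  rcases Nat.eq_zero_or_pos k with hk0 | hkpos
  · exfalso
    subst hk0
    rw [Finset.univ_eq_empty, Finset.sum_empty, Real.sqrt_zero] at hRv
    linarith
  haveI : Nonempty (Fin k) := Fin.pos_iff_nonempty.1 hkpos
  have hkR : (0:ℝ) < k := by exact_mod_cast hkpos
  -- find a big coordinate
  have hsumnn : (0:ℝ) ≤ ∑ i, v i ^ 2 := Finset.sum_nonneg fun i _ => sq_nonneg _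
  have hsq : R ^ 2 ≤ ∑ i, v i ^ 2 := by
    have := pow_le_pow_left₀ hRpos.le hRv 2
    rwa [Real.sq_sqrt hsumnn] at this
  have hex : ∃ i ∈ Finset.univ, R ^ 2 / k ≤ v i ^ 2 := by
    apply Finset.exists_le_of_sum_le Finset.univ_nonempty
    rw [Finset.sum_const, Finset.card_univ, Fintype.card_fin, nsmul_eq_mul]
    rw [mul_div_cancel₀ _ (ne_of_gt hkR)]
    exact hsq
  obtain ⟨i, -, hi⟩ := hex
  set t := R / Real.sqrt k with ht
  have hsqrtk : (0:ℝ) < Real.sqrt k := Real.sqrt_pos.2 hkR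
  have htles : 1 + Real.sqrt (K / c) ≤ t := by
    rw [ht, le_div_iff₀ hsqrtk]
    rw [hR]; ring_nf; nlinarith [Real.sqrt_nonneg (K/c), hsqrtk]
  have hvi : t ≤ v i := by
    have ht2 : t ^ 2 ≤ v i ^ 2 := by
      rw [ht, div_pow, Real.sq_sqrt hkR.le]
      exact hi
    exact le_of_pow_le_pow_left₀ two_ne_zero (hv i) ht2
  obtain ⟨j, hjS, hj0⟩ := hTS i
  -- block weight at j is v i
  have hbw : blockWeight S v j = v i := by
    unfold blockWeight
    rw [Finset.sum_eq_single i]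
    · rw [if_pos hjS]
    · intro i' _ hne
      have hnj : j ∉ S i' := fun hj' => (Finset.disjoint_left.1 (hdisj i' i hne)) hj' hjS
      rw [if_neg hnj]
    · intro h; exact absurd (Finset.mem_univ i) h
  have hsgn : |Real.sign (x₀ j)| = 1 := by
    rcases Real.sign_apply_eq_of_ne_zero _ hj0 with h | h <;> rw [h] <;> norm_num
  set A := deltaMap S v '' Cset x₀ with hA
  have hCne : (Cset x₀).Nonempty := by
    refine ⟨sgnVec x₀, 0, fun j _ => rfl, fun j => by norm_num, by simp⟩
  have hAne : A.Nonempty := hCne.image _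
  have hcoord : ∀ a ∈ A, |a j| = v i := by
    rintro a ⟨p, ⟨u, hu0, hu1, rfl⟩, rfl⟩
    show |deltaMap S v (sgnVec x₀ + u) j| = v i
    have : deltaMap S v (sgnVec x₀ + u) j = v i * Real.sign (x₀ j) := by
      show blockWeight S v j * (sgnVec x₀ + u) j = _
      have hsum : (sgnVec x₀ + u) j = Real.sign (x₀ j) + u j := rfl
      rw [hbw, hsum, hu0 j hj0, add_zero]
    rw [this, abs_mul, hsgn, mul_one, abs_of_nonneg (hv i)]
  have hlow : ∀ g : EuclideanSpace ℝ (Fin d), v i - |g j| ≤ Metric.infDist g A := by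
    intro g
    apply le_infDist_of hAne
    intro a ha
    have h1 : |a j| = v i := hcoord a ha
    have h2 : |g j - a j| ≤ dist g a := by
      rw [dist_eq_norm]
      have : (g - a) j = g j - a j := rfl
      rw [← this]
      exact abs_coord_le_norm (g - a) j
    have h3 : |a j| - |g j| ≤ |g j - a j| := by
      rw [abs_sub_comm]
      exact abs_sub_abs_le_abs_sub _ _
    linarith
  -- the event
  set E := {g : EuclideanSpace ℝ (Fin d) | |g j| ≤ 1} with hE
  have hEmeas : MeasurableSet E := by
    have hmeas : Measurable fun g : EuclideanSpace ℝ (Fin d) => g j := by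
      exact (measurable_pi_apply j).comp
        (MeasurableEquiv.toLp 2 (Fin d → ℝ)).symm.measurable
    have : E = (fun g : EuclideanSpace ℝ (Fin d) => g j) ⁻¹' Set.Icc (-1:ℝ) 1 := by
      ext g; simp only [Set.mem_preimage, Set.mem_setOf_eq, Set.mem_Icc, hE]; exact abs_le
    rw [this]
    exact hmeas measurableSet_Icc
  set D := K / c with hD
  have hDnn : 0 ≤ D := le_of_lt (div_pos hK hcpos)
  have hptwise : ∀ g : EuclideanSpace ℝ (Fin d),
      E.indicator (fun _ => D) g ≤ Metric.infDist g A ^ 2 := by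
    intro g
    by_cases hg : g ∈ E
    · rw [Set.indicator_of_mem hg]
      have hgj : |g j| ≤ 1 := hg
      have h1 : Real.sqrt D ≤ Metric.infDist g A := by
        have := hlow g
        have : Real.sqrt D ≤ v i - |g j| := by linarith [htles, hvi]
        linarith [hlow g]
      have h2 : Real.sqrt D ^ 2 ≤ Metric.infDist g A ^ 2 :=
        pow_le_pow_left₀ (Real.sqrt_nonneg _) h1 2
      rwa [Real.sq_sqrt hDnn] at h2
    · rw [Set.indicator_of_notMem hg]
      exact sq_nonneg _
  have hint : ∫ g, E.indicator (fun _ => D) g ∂(stdGaussianE d) ≤ phiE S x₀ v := by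
    rw [phiE]
    apply integral_mono_of_nonneg
    · exact Filter.Eventually.of_forall fun g => Set.indicator_nonneg (fun _ _ => hDnn) g
    · exact integrable_sq_infDist A
    · exact Filter.Eventually.of_forall hptwise
  have hval : ∫ g, E.indicator (fun _ => D) g ∂(stdGaussianE d) = K := by
    rw [integral_indicator_const _ hEmeas]
    rw [hE, measureReal_def, stdGaussianE_slab j]
    rw [smul_eq_mul, ← hc, hD]
    field_simp
  linarith [hint, hval.symm.le]

end
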